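/- Let c: ℤ→(0,∞) be bounded away from 0 and ∞, and let 0<a≤b and δ∈(0,2a) be such that the scalar equation u(n+1)=c(n)/(a−δ/2)·u(n) has an exponential dichotomy with projector 0 and rate θ∈(0,1), and s(n+1)=c(n)/(b+δ/2)·s(n) has an exponential dichotomy with constant K=1, projector 1 and rate θ. Then there exist sequences h(n)∈[a,b] and Δ(n) with |Δ(n)|≤δ/2 and constants 0<M₂<1<M₁ such that M₂ ≤ ∏_{j=0}^{n-1} c(j)/(h(j)+Δ(j)) ≤ M₁ for all n≥1 and M₂ ≤ ∏_{j=n}^{-1} (c(j)/(h(j)+Δ(j)))^{-1} ≤ M₁ for all n≤−1. -/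

import Mathlib

noncomputable def fundS (a : ℤ → ℝ) (n : ℤ) : ℝ :=
  if 0 ≤ n then ((List.range n.toNat).map (fun j => a (j : ℤ))).prod
  else ((List.range (-n).toNat).map (fun j => (a (n + (j : ℤ)))⁻¹)).prod

def ExpDichS (a : ℤ → ℝ) : Prop :=
  ∃ K ρ : ℝ, 1 ≤ K ∧ ρ ∈ Set.Ioo (0:ℝ) 1 ∧ ∃ p : ℝ, p * p = p ∧
    (∀ n k : ℤ, k ≤ n → |fundS a n * p * (fundS a k)⁻¹| ≤ K * ρ ^ (n - k)) ∧
    (∀ n k : ℤ, n ≤ k → |fundS a n * (1 - p) * (fundS a k)⁻¹| ≤ K * ρ ^ (k - n))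

def SSpecS (a : ℤ → ℝ) : Set ℝ := {l | 0 < l ∧ ¬ ExpDichS (fun n => l⁻¹ * a n)}

namespace TechAux

/-- forward sequence -/
noncomputable def Pf (g : ℤ → ℝ) : ℕ → ℝ
  | 0 => 1
  | k+1 => min 1 (Pf g k * g (k : ℤ))

/-- backward sequence, Pb k ~ P (-k) -/
noncomputable def Pb (g : ℤ → ℝ) : ℕ → ℝ
  | 0 => 1
  | k+1 => max 1 (Pb g k / g (-(k : ℤ) - 1))

noncomputable def P (g : ℤ → ℝ) (n : ℤ) : ℝ :=
  if 0 ≤ n then Pf g n.toNat else Pb g (-n).toNat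

lemma P_zero (g : ℤ → ℝ) : P g 0 = 1 := by simp [P, Pf]

lemma P_succ (g : ℤ → ℝ) {n : ℤ} (hn : 0 ≤ n) :
    P g (n + 1) = min 1 (P g n * g n) := by
  have h1 : (0:ℤ) ≤ n + 1 := by omega
  have h2 : (n + 1).toNat = n.toNat + 1 := by omega
  have h3 : ((n.toNat : ℤ)) = n := by omega
  simp only [P, if_pos hn, if_pos h1, h2, Pf, h3]

lemma P_pred (g : ℤ → ℝ) {n : ℤ} (hn : n < 0) :
    P g n = max 1 (P g (n + 1) / g n) := by
  have h1 : ¬ (0:ℤ) ≤ n := by omega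
  have h2 : (-n).toNat = (-(n+1)).toNat + 1 := by omega
  have h3 : (-(((-(n+1)).toNat : ℤ))) - 1 = n := by omega
  have h4 : P g (n + 1) = Pb g (-(n+1)).toNat := by
    by_cases h5 : (0:ℤ) ≤ n + 1
    · have h6 : n + 1 = 0 := by omega
      simp [P, h6, Pf, Pb]
    · simp [P, if_neg h5]
  have h5 : P g n = Pb g ((-(n+1)).toNat + 1) := by
    unfold P; rw [if_neg h1, h2]
  rw [h4, h5, Pb, h3]

lemma P_pos {g : ℤ → ℝ} (hg : ∀ n, 0 < g n) (n : ℤ) : 0 < P g n := by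
  unfold P
  split
  · induction n.toNat with
    | zero => norm_num [Pf]
    | succ k ih => exact lt_min one_pos (mul_pos ih (hg _))
  · induction (-n).toNat with
    | zero => norm_num [Pb]
    | succ k ih => exact lt_max_of_lt_left one_pos

lemma P_le_one {g : ℤ → ℝ} {n : ℤ} (hn : 0 ≤ n) : P g n ≤ 1 := by
  unfold P
  rw [if_pos hn]
  cases h : n.toNat with
  | zero => simp [Pf]
  | succ k => exact min_le_left _ _

lemma one_le_P {g : ℤ → ℝ} {n : ℤ} (hn : n ≤ 0) : 1 ≤ P g n := by
  unfold P
  by_cases h : (0:ℤ) ≤ n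
  · have : n = 0 := le_antisymm hn h
    simp [this, Pf]
  · rw [if_neg h]
    cases h2 : (-n).toNat with
    | zero => simp [Pb]
    | succ k => exact le_max_left _ _

lemma Ico_succ_insert {m n : ℤ} (h : m ≤ n) :
    Finset.Ico m (n + 1) = insert n (Finset.Ico m n) := by
  ext x
  simp only [Finset.mem_Ico, Finset.mem_insert]
  omega

lemma prod_Ico_succ_top {m n : ℤ} (h : m ≤ n) (f : ℤ → ℝ) :
    ∏ j ∈ Finset.Ico m (n + 1), f j = (∏ j ∈ Finset.Ico m n, f j) * f n := by
  rw [Ico_succ_insert h, Finset.prod_insert (by simp), mul_comm]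

/-- representation of forward P as a product -/
lemma Pf_repr (g : ℤ → ℝ) (k : ℕ) :
    ∃ m : ℤ, 0 ≤ m ∧ m ≤ (k : ℤ) ∧ Pf g k = ∏ j ∈ Finset.Ico m (k : ℤ), g j := by
  induction k with
  | zero => exact ⟨0, le_refl _, le_refl _, by simp [Pf]⟩
  | succ k ih =>
    obtain ⟨m, hm0, hmk, hPf⟩ := ih
    rcases le_or_gt 1 (Pf g k * g (k : ℤ)) with h | h
    · refine ⟨(k:ℤ) + 1, by omega, by push_cast; omega, ?_⟩
      simp [Pf, min_eq_left h]
    · refine ⟨m, hm0, by push_cast; omega, ?_⟩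
      have : ((k:ℤ) + 1) = ((k+1 : ℕ) : ℤ) := by push_cast; ring
      rw [Pf, min_eq_right h.le, hPf, ← prod_Ico_succ_top hmk g, this]

/-- representation of backward P as an inverse product -/
lemma Pb_repr {g : ℤ → ℝ} (hg : ∀ n, 0 < g n) (k : ℕ) :
    ∃ m : ℤ, -(k:ℤ) ≤ m ∧ m ≤ 0 ∧
      Pb g k = (∏ j ∈ Finset.Ico (-(k:ℤ)) m, g j)⁻¹ := by
  induction k with
  | zero => exact ⟨0, le_refl _, le_refl _, by simp [Pb]⟩
  | succ k ih =>
    obtain ⟨m, hmk, hm0, hPb⟩ := ih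
    rcases le_or_gt (Pb g k / g (-(k:ℤ) - 1)) 1 with h | h
    · refine ⟨-(k:ℤ) - 1, by push_cast; omega, by omega, ?_⟩
      rw [Pb, max_eq_left h, Finset.Ico_eq_empty (by push_cast; omega)]
      simp
    · refine ⟨m, by push_cast; omega, hm0, ?_⟩
      rw [Pb, max_eq_right h.le, hPb]
      have hsplit : Finset.Ico (-((k:ℕ)+1 : ℕ) : ℤ) m =
          insert (-(k:ℤ) - 1) (Finset.Ico (-(k:ℤ)) m) := by
        ext x
        simp only [Finset.mem_Ico, Finset.mem_insert]
        push_cast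
        omega
      rw [hsplit, Finset.prod_insert (by simp), mul_inv, div_eq_mul_inv, mul_comm]

lemma prod_pos_Ico {g : ℤ → ℝ} (hg : ∀ n, 0 < g n) (m n : ℤ) :
    0 < ∏ j ∈ Finset.Ico m n, g j :=
  Finset.prod_pos fun j _ => hg j

/-- telescoping -/
lemma telescope {g : ℤ → ℝ} (hg : ∀ n, 0 < g n) {m n : ℤ} (h : m ≤ n) :
    ∏ j ∈ Finset.Ico m n, (P g (j+1) / P g j) = P g n / P g m := by
  obtain ⟨k, rfl⟩ : ∃ k : ℕ, n = m + k := ⟨(n - m).toNat, by omega⟩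
  clear h
  induction k with
  | zero => simp [(P_pos hg m).ne']
  | succ k ih =>
    have hstep : m + ((k:ℕ)+1 : ℕ) = (m + k) + 1 := by push_cast; ring
    rw [hstep, prod_Ico_succ_top (by omega), ih]
    have h1 := (P_pos hg (m + k)).ne'
    have h2 := (P_pos hg m).ne'
    field_simp


lemma bind_cast_eq_map (l : List ℕ) :
    (l >>= fun a => (pure ((a:ℕ) : ℤ) : List ℤ)) = l.map (fun a : ℕ => ((a:ℕ) : ℤ)) := by
  rw [bind_pure_comp]
  rfl

lemma fundS_succ (a : ℤ → ℝ) (n : ℤ) (hne : a n ≠ 0) :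
    fundS a (n + 1) = a n * fundS a n := by
  by_cases hn : 0 ≤ n
  · have h1 : (0:ℤ) ≤ n + 1 := by omega
    have h2 : (n + 1).toNat = n.toNat + 1 := by omega
    have h3 : ((n.toNat : ℤ)) = n := by omega
    simp only [fundS, if_pos hn, if_pos h1, h2, bind_cast_eq_map, List.map_map,
      List.range_succ, List.map_append, List.prod_append, List.map_cons, List.prod_cons,
      List.map_nil, List.prod_nil, Function.comp, h3]
    ring
  · have hn' : n < 0 := by omega
    have key : fundS a n = (a n)⁻¹ *
        ((List.range (-(n+1)).toNat).map (fun j => (a (n + 1 + (j : ℤ)))⁻¹)).prod := by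
      have h2 : (-n).toNat = (-(n+1)).toNat + 1 := by omega
      simp only [fundS, if_neg (show ¬(0:ℤ) ≤ n by omega), h2, bind_cast_eq_map,
        List.map_map, List.range_succ_eq_map, List.map_cons, List.prod_cons, List.map_map,
        Function.comp]
      congr 1
      · norm_num
      · congr 1
        apply List.map_congr_left
        intro j _
        simp only [Function.comp_apply]
        have harg : n + ((Nat.succ j : ℕ) : ℤ) = n + 1 + (j : ℤ) := by push_cast; ring
        rw [harg]
    have key2 : ((List.range (-(n+1)).toNat).map (fun j => (a (n + 1 + (j : ℤ)))⁻¹)).prod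
        = fundS a (n + 1) := by
      unfold fundS
      by_cases h5 : (0:ℤ) ≤ n + 1
      · have h6 : n + 1 = 0 := by omega
        simp [h6]
      · rw [if_neg h5]
    rw [key, key2] at *
    field_simp

lemma fundS_pos {a : ℤ → ℝ} (hpos : ∀ n, 0 < a n) (n : ℤ) : 0 < fundS a n := by
  unfold fundS
  split
  · apply List.prod_pos
    intro x hx
    simp only [List.mem_map, List.mem_range] at hx
    obtain ⟨j, _, rfl⟩ := hx
    exact hpos _
  · apply List.prod_pos
    intro x hx
    simp only [List.mem_map, List.mem_range] at hx
    obtain ⟨j, _, rfl⟩ := hx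
    exact inv_pos.2 (hpos _)

lemma fundS_prod {a : ℤ → ℝ} (hpos : ∀ n, 0 < a n) {m n : ℤ} (h : m ≤ n) :
    fundS a n = fundS a m * ∏ j ∈ Finset.Ico m n, a j := by
  obtain ⟨k, rfl⟩ : ∃ k : ℕ, n = m + k := ⟨(n - m).toNat, by omega⟩
  clear h
  induction k with
  | zero => simp
  | succ k ih =>
    have hstep : m + ((k:ℕ)+1 : ℕ) = (m + k) + 1 := by push_cast; ring
    rw [hstep, prod_Ico_succ_top (by omega), fundS_succ a (m + k) (hpos _).ne', ih]
    ring

end TechAux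

open TechAux in
/-- Existence of sequences h(n) ∈ [a,b] and |Δ(n)| ≤ δ/2 making all the products
∏ c(j)/(h(j)+Δ(j)) uniformly bounded above and below. -/
theorem technical_lemma (c : ℤ → ℝ)
    (hc : ∃ ε M : ℝ, 0 < ε ∧ ∀ n, ε ≤ c n ∧ c n ≤ M)
    (a b δ : ℝ) (ha : 0 < a) (hab : a ≤ b) (hδ : 0 < δ) (hδ2 : δ < 2 * a)
    (θ K : ℝ) (hθ : θ ∈ Set.Ioo (0:ℝ) 1) (hK : 1 ≤ K)
    (hU : ∀ n k : ℤ, n ≤ k →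
      |fundS (fun j => c j / (a - δ / 2)) n * (fundS (fun j => c j / (a - δ / 2)) k)⁻¹| ≤
        K * θ ^ (k - n))
    (hS : ∀ n k : ℤ, k ≤ n →
      |fundS (fun j => c j / (b + δ / 2)) n * (fundS (fun j => c j / (b + δ / 2)) k)⁻¹| ≤
        θ ^ (n - k)) :
    ∃ h Δ : ℤ → ℝ, ∃ M₁ M₂ : ℝ, 0 < M₂ ∧ M₂ < 1 ∧ 1 < M₁ ∧
      (∀ n, h n ∈ Set.Icc a b) ∧ (∀ n, |Δ n| ≤ δ / 2) ∧
      (∀ n : ℤ, 1 ≤ n →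
        M₂ ≤ ∏ j ∈ Finset.Ico (0:ℤ) n, c j / (h j + Δ j) ∧
        ∏ j ∈ Finset.Ico (0:ℤ) n, c j / (h j + Δ j) ≤ M₁) ∧
      (∀ n : ℤ, n ≤ -1 →
        M₂ ≤ ∏ j ∈ Finset.Ico n (0:ℤ), (c j / (h j + Δ j))⁻¹ ∧
        ∏ j ∈ Finset.Ico n (0:ℤ), (c j / (h j + Δ j))⁻¹ ≤ M₁) := by
  obtain ⟨ε, M, hε, hcM⟩ := hc
  have hcpos : ∀ n, 0 < c n := fun n => lt_of_lt_of_le hε (hcM n).1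
  obtain ⟨hθ0, hθ1⟩ := hθ
  have hK0 : (0:ℝ) < K := lt_of_lt_of_le one_pos hK
  have hden1 : (0:ℝ) < a - δ / 2 := by linarith
  have hden2 : (0:ℝ) < b + δ / 2 := by linarith
  set g : ℤ → ℝ := fun j => c j / (a - δ / 2) with hgdef
  set f : ℤ → ℝ := fun j => c j / (b + δ / 2) with hfdef
  have hgpos : ∀ n, 0 < g n := fun n => div_pos (hcpos n) hden1
  have hfpos : ∀ n, 0 < f n := fun n => div_pos (hcpos n) hden2
  -- H1 : each f k ≤ θ
  have H1 : ∀ k : ℤ, c k / (b + δ / 2) ≤ θ := by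
    intro k
    have h := hS (k + 1) k (by omega)
    rw [fundS_succ f k (hfpos k).ne'] at h
    rw [mul_assoc, mul_inv_cancel₀ (fundS_pos hfpos k).ne', mul_one] at h
    rw [abs_of_pos (hfpos k)] at h
    have h2 : (k + 1 - k : ℤ) = 1 := by ring
    rw [h2, zpow_one] at h
    exact h
  have hcb : ∀ k : ℤ, c k ≤ b + δ / 2 := by
    intro k
    have := H1 k
    have h2 : c k / (b + δ / 2) ≤ 1 := le_trans this hθ1.le
    calc c k = (c k / (b + δ / 2)) * (b + δ / 2) := (div_mul_cancel₀ (c k) hden2.ne').symm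
    _ ≤ 1 * (b + δ / 2) := mul_le_mul_of_nonneg_right h2 hden2.le
    _ = b + δ / 2 := one_mul _
  -- H2 : products of g over intervals are at least K⁻¹
  have H2 : ∀ m n : ℤ, m ≤ n → K⁻¹ ≤ ∏ j ∈ Finset.Ico m n, g j := by
    intro m n hmn
    have h := hU m n hmn
    rw [fundS_prod hgpos hmn, mul_inv, ← mul_assoc,
      mul_inv_cancel₀ (fundS_pos hgpos m).ne', one_mul] at h
    set Q := ∏ j ∈ Finset.Ico m n, g j with hQ
    have hQpos : 0 < Q := prod_pos_Ico hgpos m n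
    rw [abs_inv, abs_of_pos hQpos] at h
    have hθpow : θ ^ (n - m) ≤ 1 := by
      obtain ⟨t, ht⟩ := Int.eq_ofNat_of_zero_le (show (0:ℤ) ≤ n - m by omega)
      rw [ht, zpow_natCast]
      exact pow_le_one₀ hθ0.le hθ1.le
    have h3 : Q⁻¹ ≤ K := le_trans h (by nlinarith)
    rw [← inv_inv Q]
    exact inv_anti₀ (inv_pos.2 hQpos) h3
  -- bounds for P g
  have hPpos := P_pos hgpos
  have hPgeK : ∀ n : ℤ, 0 ≤ n → K⁻¹ ≤ P g n := by
    intro n hn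
    obtain ⟨m, hm0, hmk, heq⟩ := Pf_repr g n.toNat
    have hPn : P g n = Pf g n.toNat := by unfold P; rw [if_pos hn]
    have h3 : ((n.toNat : ℤ)) = n := by omega
    rw [hPn, heq, h3]
    exact H2 m n (by omega)
  have hPleK : ∀ n : ℤ, n ≤ 0 → P g n ≤ K := by
    intro n hn
    obtain ⟨m, hmk, hm0, heq⟩ := Pb_repr hgpos (-n).toNat
    have hPn : P g n = Pb g (-n).toNat := by
      by_cases h : (0:ℤ) ≤ n
      · have : n = 0 := by omega
        simp [P, this, Pf, Pb]
      · unfold P; rw [if_neg h]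
    have h3 : (-(((-n).toNat : ℤ))) = n := by omega
    rw [hPn, heq, h3]
    have hQ := H2 n m (by omega)
    have hQpos : 0 < ∏ j ∈ Finset.Ico n m, g j := prod_pos_Ico hgpos n m
    calc (∏ j ∈ Finset.Ico n m, g j)⁻¹ ≤ (K⁻¹)⁻¹ :=
          inv_anti₀ (inv_pos.2 hK0) hQ
    _ = K := inv_inv K
  -- the sequence d
  set d : ℤ → ℝ := fun n => c n * P g n / P g (n + 1) with hddef
  have hgn : ∀ n : ℤ, g n = c n / (a - δ / 2) := fun n => rfl
  have hgen1 : ∀ x y z : ℝ, x ≠ 0 → x * (y * (z / x)) = z * y := by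
    intro x y z hx; field_simp
  have hgen2 : ∀ x y z : ℝ, x ≠ 0 → z ≠ 0 → x * (y / (x / z)) = z * y := by
    intro x y z hx hz; rw [div_div_eq_mul_div, mul_div_assoc', mul_comm x (y * z),
      mul_div_assoc, div_self hx, mul_one]; ring
  have hgen3 : ∀ x y z : ℝ, x ≠ 0 → z ≠ 0 → y * (x / (x * z)) = y / z := by
    intro x y z hx hz; field_simp
  have hd1 : ∀ n, a - δ / 2 ≤ d n := by
    intro n
    show a - δ / 2 ≤ c n * P g n / P g (n + 1)
    rw [le_div_iff₀ (hPpos (n + 1))]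
    by_cases hn : 0 ≤ n
    · have h2 : P g (n + 1) ≤ P g n * g n := by
        rw [P_succ g hn]; exact min_le_right _ _
      have h5 : (a - δ / 2) * (P g n * g n) = c n * P g n := by
        rw [hgn n]; exact hgen1 _ _ _ hden1.ne'
      calc (a - δ / 2) * P g (n + 1) ≤ (a - δ / 2) * (P g n * g n) :=
            mul_le_mul_of_nonneg_left h2 hden1.le
      _ = c n * P g n := h5
    · have h2 : P g (n + 1) / g n ≤ P g n := by
        rw [P_pred g (show n < 0 by omega)]; exact le_max_right _ _
      have h3 : c n * (P g (n + 1) / g n) ≤ c n * P g n :=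
        mul_le_mul_of_nonneg_left h2 (hcpos n).le
      have h4 : c n * (P g (n + 1) / g n) = (a - δ / 2) * P g (n + 1) := by
        rw [hgn n]; exact hgen2 _ _ _ (hcpos n).ne' hden1.ne'
      linarith [h3, h4.symm.le]
  have hd2 : ∀ n, d n ≤ b + δ / 2 := by
    intro n
    show c n * P g n / P g (n + 1) ≤ b + δ / 2
    rw [div_le_iff₀ (hPpos (n + 1))]
    by_cases hn : 0 ≤ n
    · rw [P_succ g hn, mul_min_of_nonneg _ _ hden2.le]
      apply le_min
      · have hP1 : P g n ≤ 1 := P_le_one hn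
        calc c n * P g n ≤ c n * 1 := mul_le_mul_of_nonneg_left hP1 (hcpos n).le
        _ = c n := mul_one _
        _ ≤ b + δ / 2 := hcb n
        _ = (b + δ / 2) * 1 := (mul_one _).symm
      · have key : c n ≤ (b + δ / 2) * g n := by
          rw [hgn n, mul_comm, div_mul_eq_mul_div, le_div_iff₀ hden1]
          exact mul_le_mul_of_nonneg_left (by linarith) (hcpos n).le
        calc c n * P g n ≤ ((b + δ / 2) * g n) * P g n :=
              mul_le_mul_of_nonneg_right key (hPpos n).le
        _ = (b + δ / 2) * (P g n * g n) := by ring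
    · rw [P_pred g (show n < 0 by omega), mul_max_of_nonneg _ _ (hcpos n).le]
      apply max_le
      · have hP1 : 1 ≤ P g (n + 1) := one_le_P (show n + 1 ≤ 0 by omega)
        calc c n * 1 = c n := mul_one _
        _ ≤ b + δ / 2 := hcb n
        _ = (b + δ / 2) * 1 := (mul_one _).symm
        _ ≤ (b + δ / 2) * P g (n + 1) := mul_le_mul_of_nonneg_left hP1 hden2.le
      · have h4 : c n * (P g (n + 1) / g n) = (a - δ / 2) * P g (n + 1) := by
          rw [hgn n]; exact hgen2 _ _ _ (hcpos n).ne' hden1.ne'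
        rw [h4]
        exact mul_le_mul_of_nonneg_right (by linarith) (hPpos (n + 1)).le
  -- ratio identity
  have hratio : ∀ j : ℤ, c j / d j = P g (j + 1) / P g j := by
    intro j
    show c j / (c j * P g j / P g (j + 1)) = P g (j + 1) / P g j
    rw [div_div_eq_mul_div, mul_comm (c j) (P g (j + 1)), mul_div_assoc]
    exact hgen3 (c j) (P g (j + 1)) (P g j) (hcpos j).ne' (hPpos j).ne'
  have hsum : ∀ j : ℤ, (max a (min b (d j))) + (d j - max a (min b (d j))) = d j :=
    fun j => by ring
  -- conclusion
  refine ⟨fun n => max a (min b (d n)), fun n => d n - max a (min b (d n)),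
    K + 1, (K + 1)⁻¹, by positivity, ?_, by linarith, ?_, ?_, ?_, ?_⟩
  · have h0 : (1:ℝ) < K + 1 := by linarith
    have := inv_anti₀ one_pos (show (1:ℝ) ≤ K + 1 by linarith)
    have h2 : (K + 1)⁻¹ * (K + 1) = 1 := inv_mul_cancel₀ (by linarith)
    nlinarith [inv_pos.2 (show (0:ℝ) < K + 1 by linarith)]
  · intro n
    exact ⟨le_max_left _ _, max_le hab (min_le_left _ _)⟩
  · intro n
    show |d n - max a (min b (d n))| ≤ δ / 2
    rw [abs_le]
    rcases le_total (d n) a with h1 | h1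
    · rw [min_eq_right (le_trans h1 hab), max_eq_left h1]
      exact ⟨by linarith [hd1 n], by linarith⟩
    · rcases le_total b (d n) with h2 | h2
      · rw [min_eq_left h2, max_eq_right hab]
        exact ⟨by linarith, by linarith [hd2 n]⟩
      · rw [min_eq_right h2, max_eq_right h1]
        constructor <;> linarith
  · intro n hn
    beta_reduce
    have hprod : ∏ j ∈ Finset.Ico (0:ℤ) n,
        c j / ((max a (min b (d j))) + (d j - max a (min b (d j)))) = P g n := by
      rw [Finset.prod_congr rfl (fun j _ => by rw [hsum j, hratio j]),
        telescope hgpos (show (0:ℤ) ≤ n by omega), P_zero, div_one]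
    rw [hprod]
    constructor
    · calc (K + 1)⁻¹ ≤ K⁻¹ := inv_anti₀ hK0 (by linarith)
      _ ≤ P g n := hPgeK n (by omega)
    · calc P g n ≤ 1 := P_le_one (by omega)
      _ ≤ K + 1 := by linarith
  · intro n hn
    beta_reduce
    have hprod : ∏ j ∈ Finset.Ico n (0:ℤ),
        (c j / ((max a (min b (d j))) + (d j - max a (min b (d j)))))⁻¹ = P g n := by
      rw [Finset.prod_congr rfl (fun j _ => by rw [hsum j, hratio j]),
        Finset.prod_inv_distrib,
        telescope hgpos (show n ≤ (0:ℤ) by omega), P_zero]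
      rw [one_div, inv_inv]
    rw [hprod]
    constructor
    · have h1 : 1 ≤ P g n := one_le_P (by omega)
      have h2 : (K + 1)⁻¹ ≤ 1 := by
        have := inv_anti₀ one_pos (show (1:ℝ) ≤ K + 1 by linarith)
        simpa using this
      linarith
    · calc P g n ≤ K := hPleK n (by omega)
      _ ≤ K + 1 := by linarith
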